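/- arXiv:1703.00972 — 2 statements merged into one kernel-verified Lean document; each statement's English description precedes it below -/
import Mathlib

section
/- (Individual rationality of the DR mechanism.) In the DR mechanism setting, suppose that for each user i there is a strictly monotonically increasing expected-utility function μ_i : ℝ → ℝ with μ_i(r̃_i) = 0, and suppose j_max exists and j(i) exists for every i ∈ T. Then every targeted user i ∈ T receives expected utility μ_i(r̃_{j(i)}) ≥ 0, while every non-targeted user receives expected utility 0; hence participation in the mechanism yields expected utility at least that of the outside option (zero) for every user. -/
/-- Individual rationality of the DR mechanism: every targeted
user `i ≤ j_max` receives expected utility `μ_i (rt_{j(i)}) ≥ 0`, while every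
non-targeted user receives expected utility `0`; hence participation yields
expected utility at least the outside option (zero) for every user. -/
theorem dr_mechanism_individually_rational
    (n : ℕ) (rt : Fin n → ℝ) (hr : Monotone rt)
    (δ : Fin n → ℝ → ℝ) (hδ : ∀ i, Monotone (δ i))
    (hδ0 : ∀ i, 0 ≤ δ i (rt i)) (M : ℝ)
    (μ : Fin n → ℝ → ℝ)
    (hμmono : ∀ i, StrictMono (μ i)) (hμzero : ∀ i, μ i (rt i) = 0)
    (jmax : Fin n)
    (hjmax : IsLeast {j : Fin n | M ≤ ∑ s ∈ Finset.Iic j, δ s (rt j)} jmax)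
    (ji : Fin n → Fin n)
    (hji : ∀ i : Fin n, i ≤ jmax → IsLeast
      {k : Fin n | M ≤ ∑ s ∈ (Finset.Iic k).erase i, δ s (rt k)} (ji i)) :
    (∀ i : Fin n, i ≤ jmax → 0 ≤ μ i (rt (ji i))) ∧
      (∀ i : Fin n, 0 ≤ if i ≤ jmax then μ i (rt (ji i)) else 0) := by
  have key : ∀ i : Fin n, i ≤ jmax → 0 ≤ μ i (rt (ji i)) := by
    intro i hi
    have hle : i ≤ ji i := by
      by_contra h
      push_neg at h
      have hnot : i ∉ Finset.Iic (ji i) := by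
        simp [Finset.mem_Iic, not_le, h]
      have hmem : M ≤ ∑ s ∈ Finset.Iic (ji i), δ s (rt (ji i)) := by
        have h1 := (hji i hi).1
        simp only [Set.mem_setOf_eq, Finset.erase_eq_of_notMem hnot] at h1
        exact h1
      have : jmax ≤ ji i := hjmax.2 hmem
      exact absurd (lt_of_le_of_lt (le_trans hi this) h) (lt_irrefl i)
    calc 0 = μ i (rt i) := (hμzero i).symm
      _ ≤ μ i (rt (ji i)) := (hμmono i).monotone (hr hle)
  refine ⟨key, fun i => ?_⟩
  split_ifs with h
  · exact key i h
  · exact le_refl 0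
end

section
/- (Non-targeted users cannot profit by misreporting.) In the DR mechanism setting, suppose j_max exists, and fix a user i with i > j_max (so i is not targeted under truthful reports). Replace user i's pair (r̃_i, δ_i) by an arbitrary report (z, δ') with δ' : ℝ → ℝ nondecreasing and δ'(z) ≥ 0, keep all other users' pairs unchanged, and relabel the n pairs so that their thresholds are again ascending. If the mechanism run on this modified profile includes the relabeled user i in its target set and assigns her reward ρ, then ρ ≤ r̃_{j_max} ≤ r̃_i. Consequently, if μ_i : ℝ → ℝ is strictly monotonically increasing with μ_i(r̃_i) = 0, then user i's expected utility μ_i(ρ) from any such misreport is at most 0, which equals her expected utility under truthful reporting. -/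
/-- Non-targeted users cannot profit by misreporting: if user
`i > j_max` replaces her pair `(rt_i, δ_i)` by an arbitrary report `(z, d)`
and the profile is relabeled (via the permutation `e`) so thresholds again
ascend, then whenever the mechanism on the modified profile targets the
relabeled user `i` (at position `p`) and assigns her reward `ρ`, one has
`ρ ≤ rt_{j_max} ≤ rt_i`; consequently, for any strictly increasing expected
utility `μ_i` with `μ_i (rt_i) = 0`, her expected utility `μ_i ρ` is at most
`0`, her expected utility under truthful reporting. -/
theorem dr_mechanism_nontargeted_cannot_profit_by_misreporting
    (n : ℕ) (rt : Fin n → ℝ) (hr : Monotone rt)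
    (δ : Fin n → ℝ → ℝ) (hδ : ∀ i, Monotone (δ i))
    (hδ0 : ∀ i, 0 ≤ δ i (rt i)) (M : ℝ)
    (jmax : Fin n)
    (hjmax : IsLeast {j : Fin n | M ≤ ∑ s ∈ Finset.Iic j, δ s (rt j)} jmax)
    (i : Fin n) (hi : jmax < i)
    (z : ℝ) (d : ℝ → ℝ) (hd : Monotone d) (hdz : 0 ≤ d z)
    (e : Equiv.Perm (Fin n))
    (R : Fin n → ℝ) (hR : R = fun k => if e k = i then z else rt (e k))
    (D : Fin n → ℝ → ℝ) (hD : D = fun k => if e k = i then d else δ (e k))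
    (hRmono : Monotone R)
    (p : Fin n) (hp : e p = i)
    (jmax' : Fin n)
    (hjmax' : IsLeast {j : Fin n | M ≤ ∑ s ∈ Finset.Iic j, D s (R j)} jmax')
    (hptargeted : p ≤ jmax')
    (jp : Fin n)
    (hjp : IsLeast
      {k : Fin n | M ≤ ∑ s ∈ (Finset.Iic k).erase p, D s (R k)} jp)
    (ρ : ℝ) (hρ : ρ = R jp) :
    ρ ≤ rt jmax ∧ rt jmax ≤ rt i ∧
      ∀ μi : ℝ → ℝ, StrictMono μi → μi (rt i) = 0 → μi ρ ≤ 0 := by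
  classical
  set A : Finset (Fin n) := (Finset.Iic jmax).image e.symm with hA
  have hqA : e.symm jmax ∈ A := Finset.mem_image.2 ⟨jmax, Finset.mem_Iic.2 le_rfl, rfl⟩
  have hAne : A.Nonempty := ⟨e.symm jmax, hqA⟩
  set k : Fin n := A.max' hAne with hk
  have hmemA : ∀ s ∈ A, e s ≤ jmax := by
    intro s hs
    rcases Finset.mem_image.1 hs with ⟨t, ht, rfl⟩
    simpa using Finset.mem_Iic.1 ht
  have hneq : ∀ s ∈ A, e s ≠ i := fun s hs h =>
    absurd (h ▸ hmemA s hs) (not_le.2 hi)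
  have hkA : k ∈ A := A.max'_mem hAne
  -- R k = rt jmax
  have hRval : ∀ s ∈ A, R s = rt (e s) := by
    intro s hs; rw [hR]; simp only [if_neg (hneq s hs)]
  have hRk : R k = rt jmax := by
    have h1 : R k ≤ rt jmax := (hRval k hkA) ▸ hr (hmemA k hkA)
    have h2 : rt jmax ≤ R k := by
      have hle := hRmono (A.le_max' _ hqA)
      have : R (e.symm jmax) = rt jmax := by
        rw [hRval _ hqA]; simp
      rw [this] at hle; exact hle
    linarith
  -- D s nonneg at R s, hence at R k for s ≤ k
  have hDnonneg : ∀ s : Fin n, s ≤ k → 0 ≤ D s (R k) := by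
    intro s hs
    have h0 : 0 ≤ D s (R s) := by
      rw [hD, hR]
      by_cases h : e s = i
      · simp only [h, if_pos rfl]; exact hdz
      · simp only [if_neg h]; exact hδ0 (e s)
    have := (by
      rw [hD]
      by_cases h : e s = i
      · simp only [if_pos h]; exact hd (hRmono hs)
      · simp only [if_neg h]; exact hδ (e s) (hRmono hs) : D s (R s) ≤ D s (R k))
    linarith
  -- sum over A equals the truthful sum at jmax
  have hsumA : ∑ s ∈ A, D s (R k) = ∑ t ∈ Finset.Iic jmax, δ t (rt jmax) := by
    rw [hA, Finset.sum_image (fun a _ b _ h => e.symm.injective h)]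
    apply Finset.sum_congr rfl
    intro t ht
    have hti : e (e.symm t) ≠ i := by
      simp only [Equiv.apply_symm_apply]
      exact fun h => absurd (h ▸ Finset.mem_Iic.1 ht) (not_le.2 hi)
    have hti' : t ≠ i := fun h => absurd (h ▸ Finset.mem_Iic.1 ht) (not_le.2 hi)
    rw [hD, hRk]
    simp [hti']
  -- A ⊆ (Iic k).erase p
  have hsub : A ⊆ (Finset.Iic k).erase p := by
    intro s hs
    refine Finset.mem_erase.2 ⟨?_, Finset.mem_Iic.2 (A.le_max' _ hs)⟩
    intro h
    exact hneq s hs (h ▸ hp)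
  -- k is in the candidate set for jp
  have hkmem : M ≤ ∑ s ∈ (Finset.Iic k).erase p, D s (R k) := by
    calc M ≤ ∑ t ∈ Finset.Iic jmax, δ t (rt jmax) := hjmax.1
    _ = ∑ s ∈ A, D s (R k) := hsumA.symm
    _ ≤ ∑ s ∈ (Finset.Iic k).erase p, D s (R k) := by
        apply Finset.sum_le_sum_of_subset_of_nonneg hsub
        intro s hs _
        exact hDnonneg s (Finset.mem_Iic.1 (Finset.mem_of_mem_erase hs))
  have hjpk : jp ≤ k := hjp.2 hkmem
  have h1 : ρ ≤ rt jmax := by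
    rw [hρ, ← hRk]; exact hRmono hjpk
  have h2 : rt jmax ≤ rt i := hr hi.le
  exact ⟨h1, h2, fun μi hμ hμ0 => by
    have := hμ.monotone (le_trans h1 h2)
    linarith⟩
end
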